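/- Let G = (V,E) be a finite undirected graph, φ > 0, and A ⊆ V with R = V∖A, and suppose Φ_{G{A}} ≥ 2φ, i.e., every S' ⊆ A with vol_G(S') ≤ vol_G(A)/2 satisfies |E_G(S', A∖S')| ≥ 2φ·vol_G(S'). Let S ⊆ V be a cut with vol_G(S) ≤ vol_G(V∖S), δ_G(S) ≤ φ·vol_G(S), and vol_G(S ∩ A) ≤ vol_G(A)/2. Then vol_G(S ∩ R) ≥ vol_G(S)/2. -/
import Mathlib


/-!
STATEMENT 17 (balanced low-conductance cut application):
Let `G = (V,E)`, `φ > 0`, `A ⊆ V`, `R = V∖A`, and suppose `Φ_{G{A}} ≥ 2φ`. Let `S` be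
a cut with `vol(S) ≤ vol(V∖S)`, `δ(S) ≤ φ·vol(S)`, and `vol(S ∩ A) ≤ vol(A)/2`.
Then `vol(S ∩ R) ≥ vol(S)/2`.
-/

open Finset

noncomputable section
open scoped Classical

/-- `|E_G(S,T)|`: the number of edges of `G` with one endpoint in `S` and the other in `T`. -/
def eCount {V : Type*} [Fintype V] [DecidableEq V] (G : SimpleGraph V) (S T : Finset V) : ℕ :=
  ((S ×ˢ T).filter fun p => G.Adj p.1 p.2).card

/-- `vol_G(S) = ∑_{v ∈ S} deg_G(v)`. -/
def vol {V : Type*} [Fintype V] [DecidableEq V] (G : SimpleGraph V) (S : Finset V) : ℕ :=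
  ∑ v ∈ S, G.degree v

theorem low_conductance_cut_overlaps_complement
    {V : Type*} [Fintype V] [DecidableEq V] (G : SimpleGraph V) (φ : ℝ) (A : Finset V)
    (hφ : 0 < φ)
    -- Φ_{G{A}} ≥ 2φ
    (hexp : ∀ S' ⊆ A, (vol G S' : ℝ) ≤ (vol G A : ℝ) / 2 →
      2 * φ * (vol G S' : ℝ) ≤ (eCount G S' (A \ S') : ℝ))
    (S : Finset V)
    (hbal : vol G S ≤ vol G Sᶜ)
    (hsparse : (eCount G S Sᶜ : ℝ) ≤ φ * (vol G S : ℝ))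
    (hSA : (vol G (S ∩ A) : ℝ) ≤ (vol G A : ℝ) / 2) :
    (vol G S : ℝ) / 2 ≤ (vol G (S ∩ Aᶜ) : ℝ) := by
  have hsub : eCount G (S ∩ A) (A \ (S ∩ A)) ≤ eCount G S Sᶜ := by
    apply Finset.card_le_card
    intro p hp
    simp only [Finset.mem_filter, Finset.mem_product, Finset.mem_inter, Finset.mem_sdiff,
      Finset.mem_compl] at hp ⊢
    refine ⟨⟨hp.1.1.1, fun hpS => hp.1.2.2 ⟨hpS, hp.1.2.1⟩⟩, hp.2⟩
  have hexp' := hexp (S ∩ A) (Finset.inter_subset_right) hSA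
  have h1 : 2 * φ * (vol G (S ∩ A) : ℝ) ≤ φ * (vol G S : ℝ) := by
    calc 2 * φ * (vol G (S ∩ A) : ℝ) ≤ (eCount G (S ∩ A) (A \ (S ∩ A)) : ℝ) := hexp'
      _ ≤ (eCount G S Sᶜ : ℝ) := by exact_mod_cast hsub
      _ ≤ φ * (vol G S : ℝ) := hsparse
  have h2 : (vol G (S ∩ A) : ℝ) ≤ (vol G S : ℝ) / 2 := by nlinarith
  have hsplit : vol G S = vol G (S ∩ A) + vol G (S ∩ Aᶜ) := by
    unfold vol
    rw [← Finset.sum_union]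
    · congr 1
      ext v
      simp only [Finset.mem_union, Finset.mem_inter, Finset.mem_compl]
      tauto
    · rw [Finset.disjoint_left]
      intro v hv hv'
      simp only [Finset.mem_inter, Finset.mem_compl] at hv hv'
      exact hv'.2 hv.2
  have : (vol G S : ℝ) = (vol G (S ∩ A) : ℝ) + (vol G (S ∩ Aᶜ) : ℝ) := by
    exact_mod_cast congrArg (Nat.cast : ℕ → ℝ) hsplit
  linarith
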